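/- Let n, k be positive integers and let A, B : Fin k → ℝ^n be points such that A(i) ≠ B(i) for every i, and for all i ≠ j: ‖A(i) − A(j)‖_1 = ‖A(i) − B(i)‖_1 + ‖B(i) − B(j)‖_1 + ‖B(j) − A(j)‖_1. Then k ≤ 2n. -/

import Mathlib

lemma l1_norm_eq {n : ℕ} (x : PiLp 1 (fun _ : Fin n => ℝ)) : ‖x‖ = ∑ t, |x t| := by
  simp [PiLp.norm_eq_sum (p := 1) (by norm_num), Real.norm_eq_abs]

lemma abs_strict (x y z : ℝ) (h : x * z < 0) : |x + y + z| < |x| + |y| + |z| := by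
  rcases abs_cases (x + y + z) with ⟨h1, _⟩ | ⟨h1, _⟩ <;>
    rcases abs_cases x with ⟨h2, _⟩ | ⟨h2, _⟩ <;>
    rcases abs_cases y with ⟨h3, _⟩ | ⟨h3, _⟩ <;>
    rcases abs_cases z with ⟨h4, _⟩ | ⟨h4, _⟩ <;> nlinarith

/-- If `A i, B i` in `(ℝ^n, d_1)` are images of the leaves of a tree and of their
adjacent vertices under an isometric embedding, i.e. `A i ≠ B i` and for `i ≠ j`
the chain `A i → B i → B j → A j` is geodesic, then `k ≤ 2n`. -/
theorem leaves_le_two_mul_l1 (n k : ℕ) (hn : 0 < n) (hk : 0 < k)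
    (A B : Fin k → PiLp 1 (fun _ : Fin n => ℝ)) (hAB : ∀ i, A i ≠ B i)
    (hchain : ∀ i j : Fin k, i ≠ j →
      ‖A i - A j‖ = ‖A i - B i‖ + ‖B i - B j‖ + ‖B j - A j‖) :
    k ≤ 2 * n := by
  have hex : ∀ i, ∃ t : Fin n, A i t ≠ B i t := fun i => Function.ne_iff.mp (fun h => hAB i (congrArg (WithLp.toLp 1) h))
  choose t ht using hex
  set f : Fin k → Fin n × Bool := fun i => (t i, decide (B i (t i) < A i (t i))) with hf
  have hinj : Function.Injective f := by
    intro i j hij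
    by_contra hne
    have htij : t i = t j := congrArg Prod.fst hij
    have hb : (B i (t i) < A i (t i)) ↔ (B j (t j) < A j (t j)) := by
      have := congrArg Prod.snd hij
      simpa [hf] using this
    set c := t i with hc
    have hxi : A i c - B i c ≠ 0 := sub_ne_zero.mpr (ht i)
    have hxj : A j c - B j c ≠ 0 := by rw [htij]; exact sub_ne_zero.mpr (ht j)
    have hprod : (A i c - B i c) * (B j c - A j c) < 0 := by
      rcases lt_or_gt_of_ne hxi with h1 | h1
      · have h2 : A j c - B j c < 0 := by
          rcases lt_or_gt_of_ne hxj with h | h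
          · exact h
          · exfalso
            have : B j (t j) < A j (t j) := by rw [← htij]; linarith
            have : B i (t i) < A i (t i) := hb.mpr this
            simp only [← hc] at this; linarith
        nlinarith
      · have h2 : 0 < A j c - B j c := by
          rcases lt_or_gt_of_ne hxj with h | h
          · exfalso
            have hnlt : ¬ B j (t j) < A j (t j) := by rw [← htij]; intro hh; linarith
            have : ¬ B i (t i) < A i (t i) := fun hh => hnlt (hb.mp hh)
            simp only [← hc] at this; linarith
          · exact h
        nlinarith
    have key : ‖A i - A j‖ < ‖A i - B i‖ + ‖B i - B j‖ + ‖B j - A j‖ := by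
      rw [l1_norm_eq, l1_norm_eq, l1_norm_eq, l1_norm_eq, ← Finset.sum_add_distrib,
        ← Finset.sum_add_distrib]
      refine Finset.sum_lt_sum (fun s _ => ?_) ⟨c, Finset.mem_univ c, ?_⟩
      · simp only [PiLp.sub_apply]
        have h1 := abs_add_le (A i s - B i s) (B i s - B j s)
        have h2 := abs_add_le (A i s - B i s + (B i s - B j s)) (B j s - A j s)
        have he : A i s - B i s + (B i s - B j s) + (B j s - A j s) = A i s - A j s := by ring
        rw [he] at h2
        linarith
      · simp only [PiLp.sub_apply]
        have he : A i c - A j c = (A i c - B i c) + (B i c - B j c) + (B j c - A j c) := by ring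
        rw [he]
        exact abs_strict _ _ _ hprod
    linarith [hchain i j hne]
  have := Fintype.card_le_of_injective f hinj
  simpa [two_mul, mul_comm] using this
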